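/- arXiv:2312.15286 — 5 statements merged into one kernel-verified Lean document; each statement's English description precedes it below -/
import Mathlib

section
/- Let m ≥ 1 and let x_1, …, x_m be distinct real numbers, and let V = V(x_1,…,x_m) be the associated m×m Vandermonde matrix (entries V_{ij} = x_i^{j-1}). Then the ℓ1 operator norm of V^{-1} satisfies ‖V^{-1}‖_{op} ≤ max_{i∈[m]} ∏_{j≠i} (1+|x_j|)/|x_j − x_i|. -/
open Matrix Finset Polynomial

/-- The ℓ1 operator norm of a square matrix: the maximum over columns of the
sum of absolute values of the entries in that column. -/
noncomputable def l1OpNorm {m : ℕ} (A : Matrix (Fin m) (Fin m) ℝ) : ℝ :=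
  ⨆ j : Fin m, ∑ i : Fin m, |A i j|

lemma l1_mul_X_sub_C (p : ℝ[X]) (a : ℝ) (N : ℕ) :
    ∑ n ∈ Finset.range (N + 1), |(p * (X - C a)).coeff n| ≤
      (1 + |a|) * ∑ n ∈ Finset.range (N + 1), |p.coeff n| := by
  have h1 : ∀ n, |(p * (X - C a)).coeff n| ≤ |(p * X).coeff n| + |a| * |p.coeff n| := by
    intro n
    have : (p * (X - C a)).coeff n = (p * X).coeff n - a * p.coeff n := by
      rw [mul_sub]
      simp [Polynomial.coeff_sub, mul_comm]
    rw [this]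
    calc |(p * X).coeff n - a * p.coeff n| ≤ |(p * X).coeff n| + |a * p.coeff n| :=
          abs_sub _ _
      _ = |(p * X).coeff n| + |a| * |p.coeff n| := by rw [abs_mul]
  calc ∑ n ∈ Finset.range (N + 1), |(p * (X - C a)).coeff n|
      ≤ ∑ n ∈ Finset.range (N + 1), (|(p * X).coeff n| + |a| * |p.coeff n|) :=
        Finset.sum_le_sum fun n _ => h1 n
    _ = (∑ n ∈ Finset.range (N + 1), |(p * X).coeff n|)
        + |a| * ∑ n ∈ Finset.range (N + 1), |p.coeff n| := by
        rw [Finset.sum_add_distrib, Finset.mul_sum]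
    _ ≤ (∑ n ∈ Finset.range (N + 1), |p.coeff n|)
        + |a| * ∑ n ∈ Finset.range (N + 1), |p.coeff n| := by
        have : ∑ n ∈ Finset.range (N + 1), |(p * X).coeff n|
            = ∑ n ∈ Finset.range N, |p.coeff n| := by
          rw [Finset.sum_range_succ']
          simp [Polynomial.coeff_mul_X]
        rw [this]
        refine add_le_add ?_ le_rfl
        exact Finset.sum_le_sum_of_subset_of_nonneg
          (Finset.range_subset_range.2 (Nat.le_succ N)) (fun _ _ _ => abs_nonneg _)
    _ = (1 + |a|) * ∑ n ∈ Finset.range (N + 1), |p.coeff n| := by ring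

lemma l1_prod_X_sub_C {ι : Type*} [DecidableEq ι] (s : Finset ι) (y : ι → ℝ) (N : ℕ) :
    ∑ n ∈ Finset.range (N + 1), |(∏ k ∈ s, (X - C (y k))).coeff n| ≤
      ∏ k ∈ s, (1 + |y k|) := by
  induction s using Finset.induction with
  | empty =>
      simp only [Finset.prod_empty]
      have : ∀ n, |(1 : ℝ[X]).coeff n| = if n = 0 then 1 else 0 := by
        intro n; rcases n with _ | n <;> simp [Polynomial.coeff_one]
      rw [Finset.sum_congr rfl fun n _ => this n]
      simp
  | @insert a s' ha ih =>
      rw [Finset.prod_insert ha, Finset.prod_insert ha, mul_comm (X - C (y a))]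
      calc ∑ n ∈ Finset.range (N + 1), |((∏ k ∈ s', (X - C (y k))) * (X - C (y a))).coeff n|
          ≤ (1 + |y a|) * ∑ n ∈ Finset.range (N + 1), |(∏ k ∈ s', (X - C (y k))).coeff n| :=
            l1_mul_X_sub_C _ _ _
        _ ≤ (1 + |y a|) * ∏ k ∈ s', (1 + |y k|) := by
            refine mul_le_mul_of_nonneg_left ih ?_
            positivity

/-- Gautschi's bound on the ℓ1 operator norm of the inverse Vandermonde matrix:
for distinct reals `x 1, …, x m`,
`‖V(x)⁻¹‖_op ≤ max_i ∏_{j ≠ i} (1 + |x j|) / |x j - x i|`. -/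
theorem l1OpNorm_inv_vandermonde_le (m : ℕ) (hm : 1 ≤ m) (x : Fin m → ℝ)
    (hx : Function.Injective x) :
    l1OpNorm (Matrix.vandermonde x)⁻¹ ≤
      ⨆ i : Fin m, ∏ j ∈ Finset.univ.erase i, (1 + |x j|) / |x j - x i| := by
  haveI : NeZero m := ⟨by omega⟩
  have hinj : Set.InjOn x (Finset.univ : Finset (Fin m)) := fun a _ b _ h => hx h
  -- the candidate inverse: columns are coefficients of Lagrange basis polynomials
  set B : Matrix (Fin m) (Fin m) ℝ :=
    fun i j => (Lagrange.basis Finset.univ x j).coeff i with hB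
  have hdeg : ∀ j : Fin m, (Lagrange.basis Finset.univ x j).natDegree < m := by
    intro j
    rw [Lagrange.natDegree_basis hinj (Finset.mem_univ j)]
    simp only [Finset.card_univ, Fintype.card_fin]
    omega
  have hVB : Matrix.vandermonde x * B = 1 := by
    ext i k
    rw [Matrix.mul_apply]
    simp only [Matrix.mul_apply, Matrix.vandermonde, hB, Matrix.of_apply]
    have := Polynomial.eval_eq_sum_range' (hdeg k) (x i)
    rw [Fin.sum_univ_eq_sum_range (fun j => x i ^ j * (Lagrange.basis Finset.univ x k).coeff j)]
    have hsum : ∑ j ∈ Finset.range m, x i ^ j * (Lagrange.basis Finset.univ x k).coeff j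
        = Polynomial.eval (x i) (Lagrange.basis Finset.univ x k) := by
      rw [this]
      exact Finset.sum_congr rfl fun j _ => mul_comm _ _
    rw [hsum]
    by_cases hik : i = k
    · subst hik
      rw [Lagrange.eval_basis_self hinj (Finset.mem_univ i)]
      simp [Matrix.one_apply]
    · rw [Lagrange.eval_basis_of_ne (fun h => hik h.symm) (Finset.mem_univ i)]
      simp [Matrix.one_apply, hik]
  have hinv : (Matrix.vandermonde x)⁻¹ = B := Matrix.inv_eq_right_inv hVB
  -- column bound
  have hcol : ∀ j : Fin m, ∑ i : Fin m, |B i j| ≤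
      ∏ k ∈ Finset.univ.erase j, (1 + |x k|) / |x k - x j| := by
    intro j
    have hbasis : Lagrange.basis Finset.univ x j
        = C (∏ k ∈ Finset.univ.erase j, (x j - x k)⁻¹)
          * ∏ k ∈ Finset.univ.erase j, (X - C (x k)) := by
      rw [Lagrange.basis, map_prod, ← Finset.prod_mul_distrib]
      rfl
    have hcoeff : ∀ n : ℕ, |(Lagrange.basis Finset.univ x j).coeff n|
        = (∏ k ∈ Finset.univ.erase j, |x j - x k|⁻¹)
          * |(∏ k ∈ Finset.univ.erase j, (X - C (x k))).coeff n| := by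
      intro n
      rw [hbasis, Polynomial.coeff_C_mul, abs_mul, Finset.abs_prod]
      simp [abs_inv]
    have h1 : ∑ i : Fin m, |B i j|
        = (∏ k ∈ Finset.univ.erase j, |x j - x k|⁻¹)
          * ∑ i : Fin m, |(∏ k ∈ Finset.univ.erase j, (X - C (x k))).coeff (i : ℕ)| := by
      rw [Finset.mul_sum]
      exact Finset.sum_congr rfl fun i _ => hcoeff i
    have h2 : ∑ i : Fin m, |(∏ k ∈ Finset.univ.erase j, (X - C (x k))).coeff (i : ℕ)|
        ≤ ∏ k ∈ Finset.univ.erase j, (1 + |x k|) := by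
      obtain ⟨N, hN⟩ : ∃ N, m = N + 1 := ⟨m - 1, by omega⟩
      have heq := Fin.sum_univ_eq_sum_range
        (fun n => |(∏ k ∈ Finset.univ.erase j, (X - C (x k))).coeff n|) m
      rw [heq, show Finset.range m = Finset.range (N + 1) from by rw [hN]]
      exact l1_prod_X_sub_C _ _ _
    rw [h1]
    calc (∏ k ∈ Finset.univ.erase j, |x j - x k|⁻¹)
          * ∑ i : Fin m, |(∏ k ∈ Finset.univ.erase j, (X - C (x k))).coeff (i : ℕ)|
        ≤ (∏ k ∈ Finset.univ.erase j, |x j - x k|⁻¹)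
          * ∏ k ∈ Finset.univ.erase j, (1 + |x k|) := by
          refine mul_le_mul_of_nonneg_left h2 ?_
          exact Finset.prod_nonneg fun k _ => inv_nonneg.2 (abs_nonneg _)
      _ = ∏ k ∈ Finset.univ.erase j, (1 + |x k|) / |x k - x j| := by
          rw [← Finset.prod_mul_distrib]
          refine Finset.prod_congr rfl fun k _ => ?_
          rw [abs_sub_comm (x j) (x k), inv_mul_eq_div, div_eq_div_iff_comm]
  -- conclude via sup
  rw [l1OpNorm, hinv]
  have hbdd : BddAbove (Set.range fun i : Fin m =>
      ∏ j ∈ Finset.univ.erase i, (1 + |x j|) / |x j - x i|) :=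
    Set.Finite.bddAbove (Set.finite_range _)
  exact ciSup_le fun j => le_trans (hcol j) (le_ciSup hbdd j)
end

section
/- Let k ≥ 1 and let p = (p_0, p_1, …, p_k) ∈ [0,1]^{k+1} have distinct entries, with dispersion h(p) = min_{i≠j} |p_i − p_j|. Then the ℓ1 operator norm of the inverse Vandermonde matrix satisfies ‖V(p_0,…,p_k)^{-1}‖_{op} ≤ 2^k / h(p)^k. -/
open Matrix Finset

/-- The dispersion of a tuple of reals: `h(p) = min_{i ≠ j} |p i - p j|`. -/
noncomputable def dispersion {n : ℕ} (p : Fin n → ℝ) : ℝ :=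
  sInf {d : ℝ | ∃ i j, i ≠ j ∧ d = |p i - p j|}

open Polynomial

lemma abs_coeff_sum_prod {ι : Type*} (N : ℕ) (q : ι → ℝ) (s : Finset ι) :
    ∑ i ∈ Finset.range (N + 1), |(∏ m ∈ s, (X - C (q m))).coeff i|
      ≤ ∏ m ∈ s, (1 + |q m|) := by
  classical
  induction s using Finset.cons_induction with
  | empty =>
      simp only [Finset.prod_empty, Polynomial.coeff_one]
      rw [Finset.sum_eq_single 0]
      · simp
      · intro i _ hi; simp [hi]
      · intro h; simp at h
  | cons a s ha ih =>
      rw [Finset.prod_cons, Finset.prod_cons]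
      set g := ∏ m ∈ s, (X - C (q m)) with hg
      have hXg : ∑ i ∈ Finset.range (N + 1), |(X * g).coeff i|
          = ∑ i ∈ Finset.range N, |g.coeff i| := by
        rw [Finset.sum_range_succ']
        simp [Polynomial.coeff_X_mul, Polynomial.mul_coeff_zero]
      calc ∑ i ∈ Finset.range (N + 1), |((X - C (q a)) * g).coeff i|
          ≤ ∑ i ∈ Finset.range (N + 1), (|(X * g).coeff i| + |q a| * |g.coeff i|) := by
            apply Finset.sum_le_sum
            intro i _
            have : ((X - C (q a)) * g).coeff i = (X * g).coeff i - q a * g.coeff i := by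
              rw [sub_mul, Polynomial.coeff_sub, Polynomial.coeff_C_mul]
            rw [this, ← abs_mul]
            exact abs_sub _ _
        _ = (∑ i ∈ Finset.range (N + 1), |(X * g).coeff i|)
              + |q a| * ∑ i ∈ Finset.range (N + 1), |g.coeff i| := by
            rw [Finset.sum_add_distrib, Finset.mul_sum]
        _ ≤ (∑ i ∈ Finset.range (N + 1), |g.coeff i|)
              + |q a| * ∑ i ∈ Finset.range (N + 1), |g.coeff i| := by
            refine add_le_add ?_ le_rfl
            rw [hXg]
            exact Finset.sum_le_sum_of_subset_of_nonneg
              (Finset.range_subset_range.mpr (Nat.le_succ N)) (fun i _ _ => abs_nonneg _)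
        _ = (1 + |q a|) * ∑ i ∈ Finset.range (N + 1), |g.coeff i| := by ring
        _ ≤ (1 + |q a|) * ∏ m ∈ s, (1 + |q m|) := by
            apply mul_le_mul_of_nonneg_left ih
            positivity

/-- For distinct prices `p = (p_0, …, p_k)` in `[0,1]` with dispersion `h(p)`,
the ℓ1 operator norm of the inverse Vandermonde matrix is at most `2^k / h(p)^k`. -/
theorem l1OpNorm_inv_vandermonde_le_dispersion (k : ℕ) (hk : 1 ≤ k)
    (p : Fin (k + 1) → ℝ) (hp : ∀ i, p i ∈ Set.Icc (0 : ℝ) 1)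
    (hinj : Function.Injective p) :
    l1OpNorm (Matrix.vandermonde p)⁻¹ ≤ 2 ^ k / (dispersion p) ^ k := by
  classical
  -- basic facts about the dispersion
  set S : Set ℝ := {d : ℝ | ∃ i j, i ≠ j ∧ d = |p i - p j|} with hSdef
  have hd : dispersion p = sInf S := rfl
  have hSfin : S.Finite := by
    have hsub : S ⊆ (fun ij : Fin (k+1) × Fin (k+1) => |p ij.1 - p ij.2|) '' Set.univ := by
      rintro d ⟨i, j, _, rfl⟩
      exact ⟨(i, j), trivial, rfl⟩
    exact (Set.finite_univ.image _).subset hsub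
  have h01 : (⟨0, by omega⟩ : Fin (k+1)) ≠ ⟨1, by omega⟩ := by
    intro h
    have h' := congrArg Fin.val h
    simp at h'
  have hSne : S.Nonempty :=
    ⟨|p ⟨0, by omega⟩ - p ⟨1, by omega⟩|, ⟨0, by omega⟩, ⟨1, by omega⟩, h01, rfl⟩
  have hSbdd : BddBelow S := by
    refine ⟨0, ?_⟩
    rintro d ⟨i, j, _, rfl⟩
    exact abs_nonneg _
  have hmem : dispersion p ∈ S := by rw [hd]; exact hSne.csInf_mem hSfin
  obtain ⟨i0, j0, hij0, hval⟩ := hmem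
  have hpos : 0 < dispersion p := by
    rw [hval]
    exact abs_pos.mpr (sub_ne_zero.mpr (fun h => hij0 (hinj h)))
  have hle : ∀ i j : Fin (k+1), i ≠ j → dispersion p ≤ |p i - p j| := by
    intro i j hij
    rw [hd]
    exact csInf_le hSbdd ⟨i, j, hij, rfl⟩
  -- the inverse Vandermonde matrix via Lagrange basis polynomials
  set ℓ : Fin (k+1) → ℝ[X] := fun j => Lagrange.basis Finset.univ p j with hℓ
  set L : Matrix (Fin (k+1)) (Fin (k+1)) ℝ :=
    Matrix.of (fun i j : Fin (k+1) => (ℓ j).coeff i) with hL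
  have hInjOn : Set.InjOn p (Finset.univ : Finset (Fin (k+1))) := fun a _ b _ h => hinj h
  have hdeg : ∀ j, (ℓ j).natDegree = k := by
    intro j
    simp only [hℓ]
    simp [Lagrange.natDegree_basis hInjOn (Finset.mem_univ j)]
  have hVL : Matrix.vandermonde p * L = 1 := by
    ext i j
    rw [Matrix.mul_apply, Matrix.one_apply]
    have hev : Polynomial.eval (p i) (ℓ j)
        = ∑ m ∈ Finset.range (k+1), (ℓ j).coeff m * (p i) ^ m :=
      Polynomial.eval_eq_sum_range' (by rw [hdeg]; omega) (p i)
    have hsum : ∑ m : Fin (k+1), Matrix.vandermonde p i m * L m j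
        = ∑ m ∈ Finset.range (k+1), (ℓ j).coeff m * (p i) ^ m := by
      rw [← Fin.sum_univ_eq_sum_range (fun m => (ℓ j).coeff m * (p i) ^ m) (k+1)]
      apply Finset.sum_congr rfl
      intro m _
      rw [Matrix.vandermonde_apply, hL, Matrix.of_apply, mul_comm]
    rw [hsum, ← hev]
    by_cases hij : i = j
    · subst hij
      rw [if_pos rfl]
      simp only [hℓ]
      exact Lagrange.eval_basis_self hInjOn (Finset.mem_univ i)
    · rw [if_neg hij]
      simp only [hℓ]
      exact Lagrange.eval_basis_of_ne (Ne.symm hij) (Finset.mem_univ i)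
  have hinv : (Matrix.vandermonde p)⁻¹ = L := Matrix.inv_eq_right_inv hVL
  rw [hinv, l1OpNorm]
  apply ciSup_le
  intro j
  -- factor the Lagrange basis polynomial
  have hfact : ℓ j = Polynomial.C (∏ m ∈ Finset.univ.erase j, (p j - p m)⁻¹)
      * ∏ m ∈ Finset.univ.erase j, (X - Polynomial.C (p m)) := by
    simp only [hℓ]
    rw [Lagrange.basis, map_prod, ← Finset.prod_mul_distrib]
    exact Finset.prod_congr rfl (fun m _ => rfl)
  set c := ∏ m ∈ Finset.univ.erase j, (p j - p m)⁻¹ with hc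
  set P := ∏ m ∈ Finset.univ.erase j, (X - Polynomial.C (p m)) with hP
  have hcard : (Finset.univ.erase j).card = k := by
    rw [Finset.card_erase_of_mem (Finset.mem_univ j), Finset.card_univ, Fintype.card_fin]
    omega
  have hLcoeff : ∀ i : Fin (k+1), L i j = c * P.coeff i := by
    intro i
    rw [hL, Matrix.of_apply, hfact, Polynomial.coeff_C_mul]
  have hcolsum : ∑ i : Fin (k+1), |L i j|
      = |c| * ∑ i ∈ Finset.range (k+1), |P.coeff i| := by
    rw [Finset.mul_sum, ← Fin.sum_univ_eq_sum_range (fun i => |c| * |P.coeff i|) (k+1)]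
    exact Finset.sum_congr rfl fun i _ => by rw [hLcoeff i, abs_mul]
  have hB : ∑ i ∈ Finset.range (k+1), |P.coeff i| ≤ 2 ^ k := by
    calc ∑ i ∈ Finset.range (k+1), |P.coeff i|
        ≤ ∏ m ∈ Finset.univ.erase j, (1 + |p m|) := abs_coeff_sum_prod k p _
      _ ≤ ∏ m ∈ Finset.univ.erase j, 2 := by
          apply Finset.prod_le_prod (fun m _ => by positivity)
          intro m _
          have h1 := (hp m).1
          have h2 := (hp m).2
          rw [abs_of_nonneg h1]
          linarith
      _ = 2 ^ k := by rw [Finset.prod_const, hcard]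
  have hA : |c| ≤ (dispersion p)⁻¹ ^ k := by
    rw [hc, Finset.abs_prod]
    calc ∏ m ∈ Finset.univ.erase j, |(p j - p m)⁻¹|
        ≤ ∏ m ∈ Finset.univ.erase j, (dispersion p)⁻¹ := by
          apply Finset.prod_le_prod (fun m _ => abs_nonneg _)
          intro m hm
          rw [abs_inv]
          exact inv_anti₀ hpos
            (hle j m (fun h => (Finset.mem_erase.mp hm).1 h.symm))
      _ = (dispersion p)⁻¹ ^ k := by rw [Finset.prod_const, hcard]
  rw [hcolsum]
  calc |c| * ∑ i ∈ Finset.range (k+1), |P.coeff i|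
      ≤ (dispersion p)⁻¹ ^ k * 2 ^ k :=
        mul_le_mul hA hB (Finset.sum_nonneg fun i _ => abs_nonneg _) (by positivity)
    _ = 2 ^ k / (dispersion p) ^ k := by
        rw [div_eq_mul_inv, ← inv_pow, mul_comm]
end

section
/- (Robust parametrization for polynomials.) Let k ≥ 1. There exists a constant c_2 > 0 depending only on k (one may take c_2 = 2^k) such that for every tuple p = (p_0, p_1, …, p_k) ∈ [0,1]^{k+1} with distinct entries and dispersion h(p) = min_{i≠j} |p_i − p_j| > 0, and for all vectors y, ŷ ∈ ℝ^{k+1}, the Vandermonde matrix V = V(p_0,…,p_k) satisfies ‖V^{-1} y − V^{-1} ŷ‖_1 ≤ c_2 · ‖y − ŷ‖_1 · h(p)^{-k}. -/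
open Matrix Finset

/-- The ℓ1 norm of a vector: the sum of absolute values of its entries. -/
def l1Norm {n : ℕ} (v : Fin n → ℝ) : ℝ := ∑ i, |v i|

lemma dispersion_le {n : ℕ} (p : Fin n → ℝ) {i j : Fin n} (h : i ≠ j) :
    dispersion p ≤ |p i - p j| :=
  csInf_le ⟨0, by rintro d ⟨i, j, -, rfl⟩; exact abs_nonneg _⟩ ⟨i, j, h, rfl⟩

open Polynomial in
lemma coeff_abs_sum_prod {ι : Type*} (v : ι → ℝ) (s : Finset ι) :
    ∀ n : ℕ, ∑ i ∈ Finset.range n, |(∏ m ∈ s, (X - C (v m))).coeff i|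
      ≤ ∏ m ∈ s, (1 + |v m|) := by
  classical
  induction s using Finset.induction with
  | empty =>
      intro n
      simp only [Finset.prod_empty, Polynomial.coeff_one, apply_ite abs, abs_one, abs_zero]
      rw [Finset.sum_ite_eq' (Finset.range n) 0 (fun _ => (1 : ℝ))]
      split_ifs <;> norm_num
  | @insert a s ha ih =>
      intro n
      have hB : (0:ℝ) ≤ ∏ m ∈ s, (1 + |v m|) :=
        Finset.prod_nonneg fun m _ => by positivity
      rw [Finset.prod_insert ha, Finset.prod_insert ha]
      set r : ℝ[X] := ∏ m ∈ s, (X - C (v m)) with hr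
      set B : ℝ := ∏ m ∈ s, (1 + |v m|) with hBdef
      have key : ∀ i, |((X - C (v a)) * r).coeff i|
          ≤ |(X * r).coeff i| + |v a| * |r.coeff i| := by
        intro i
        rw [sub_mul, Polynomial.coeff_sub, Polynomial.coeff_C_mul]
        calc |(X * r).coeff i - v a * r.coeff i|
            ≤ |(X * r).coeff i| + |v a * r.coeff i| := abs_sub _ _
          _ = |(X * r).coeff i| + |v a| * |r.coeff i| := by rw [abs_mul]
      have hXr : ∑ i ∈ Finset.range n, |(X * r).coeff i| ≤ B := by
        cases n with
        | zero => simpa using hB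
        | succ m =>
            rw [Finset.sum_range_succ']
            have h0 : (X * r).coeff 0 = 0 := by
              rw [Polynomial.mul_coeff_zero, Polynomial.coeff_X_zero, zero_mul]
            have hs : ∀ i, (X * r).coeff (i + 1) = r.coeff i := fun i =>
              Polynomial.coeff_X_mul r i
            simp only [h0, abs_zero, add_zero, hs]
            exact ih m
      calc ∑ i ∈ Finset.range n, |((X - C (v a)) * r).coeff i|
          ≤ ∑ i ∈ Finset.range n, (|(X * r).coeff i| + |v a| * |r.coeff i|) :=
            Finset.sum_le_sum fun i _ => key i
        _ = (∑ i ∈ Finset.range n, |(X * r).coeff i|)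
            + |v a| * ∑ i ∈ Finset.range n, |r.coeff i| := by
            rw [Finset.sum_add_distrib, Finset.mul_sum]
        _ ≤ B + |v a| * B :=
            add_le_add hXr (mul_le_mul_of_nonneg_left (ih n) (abs_nonneg _))
        _ = (1 + |v a|) * B := by ring

/-- Robust parametrization for polynomials: there is a constant `c₂ > 0`
(depending only on `k`, one may take `c₂ = 2^k`) such that for every tuple
`p ∈ [0,1]^{k+1}` with distinct entries and positive dispersion `h(p)`, and all
vectors `y, y'`, `‖V⁻¹ y − V⁻¹ y'‖₁ ≤ c₂ · ‖y − y'‖₁ · h(p)^{-k}` where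
`V = V(p_0, …, p_k)` is the Vandermonde matrix. -/
theorem robust_parametrization_polynomials (k : ℕ) (hk : 1 ≤ k) :
    ∃ c₂ : ℝ, 0 < c₂ ∧
      ∀ p : Fin (k + 1) → ℝ, (∀ i, p i ∈ Set.Icc (0 : ℝ) 1) →
        Function.Injective p → 0 < dispersion p →
        ∀ y y' : Fin (k + 1) → ℝ,
          l1Norm ((Matrix.vandermonde p)⁻¹ *ᵥ y - (Matrix.vandermonde p)⁻¹ *ᵥ y') ≤
            c₂ * l1Norm (y - y') / (dispersion p) ^ k := by
  classical
  refine ⟨2 ^ k, by positivity, ?_⟩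
  intro p hp01 hinj hdisp y y'
  set h := dispersion p with hh
  set L : Matrix (Fin (k + 1)) (Fin (k + 1)) ℝ :=
    Matrix.of fun i j => (Lagrange.basis Finset.univ p j).coeff i with hL
  have hinjOn : Set.InjOn p ↑(Finset.univ : Finset (Fin (k + 1))) :=
    fun a _ b _ hab => hinj hab
  have hdeg : ∀ j, (Lagrange.basis Finset.univ p j).natDegree = k := by
    intro j
    rw [Lagrange.natDegree_basis hinjOn (Finset.mem_univ j)]
    simp
  have hVL : Matrix.vandermonde p * L = 1 := by
    ext i j
    rw [Matrix.mul_apply, Matrix.one_apply]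
    have heval : (Lagrange.basis Finset.univ p j).eval (p i)
        = ∑ m ∈ Finset.range (k + 1),
            (Lagrange.basis Finset.univ p j).coeff m * p i ^ m := by
      exact Polynomial.eval_eq_sum_range' (by rw [hdeg j]; omega) _
    have : ∑ m : Fin (k + 1), Matrix.vandermonde p i m * L m j
        = (Lagrange.basis Finset.univ p j).eval (p i) := by
      rw [heval, ← Fin.sum_univ_eq_sum_range
        (fun m => (Lagrange.basis Finset.univ p j).coeff m * p i ^ m)]
      exact Finset.sum_congr rfl fun m _ => by
        simp [hL, Matrix.vandermonde, mul_comm]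
    rw [this]
    by_cases hij : i = j
    · subst hij
      rw [if_pos rfl]
      exact Lagrange.eval_basis_self hinjOn (Finset.mem_univ i)
    · rw [if_neg hij]
      exact Lagrange.eval_basis_of_ne (fun e => hij (e.symm)) (Finset.mem_univ i)
  have hinv : (Matrix.vandermonde p)⁻¹ = L := Matrix.inv_eq_right_inv hVL
  -- column sums bound
  have hcol : ∀ j, ∑ i : Fin (k + 1), |L i j| ≤ (h ^ k)⁻¹ * 2 ^ k := by
    intro j
    have hcard : (Finset.univ.erase j).card = k := by
      rw [Finset.card_erase_of_mem (Finset.mem_univ j)]; simp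
    have hbasis : Lagrange.basis Finset.univ p j
        = Polynomial.C (∏ m ∈ Finset.univ.erase j, (p j - p m)⁻¹)
          * ∏ m ∈ Finset.univ.erase j, (Polynomial.X - Polynomial.C (p m)) := by
      rw [Lagrange.basis]
      simp only [Lagrange.basisDivisor]
      rw [Finset.prod_mul_distrib, map_prod]
    have hsum : ∑ i : Fin (k + 1), |L i j|
        = |∏ m ∈ Finset.univ.erase j, (p j - p m)⁻¹|
          * ∑ i ∈ Finset.range (k + 1),
              |(∏ m ∈ Finset.univ.erase j,
                (Polynomial.X - Polynomial.C (p m))).coeff i| := by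
      rw [Finset.mul_sum, ← Fin.sum_univ_eq_sum_range]
      refine Finset.sum_congr rfl fun i _ => ?_
      simp only [hL, Matrix.of_apply, hbasis, Polynomial.coeff_C_mul, abs_mul]
    rw [hsum]
    have h1 : ∑ i ∈ Finset.range (k + 1),
        |(∏ m ∈ Finset.univ.erase j, (Polynomial.X - Polynomial.C (p m))).coeff i|
        ≤ 2 ^ k := by
      refine (coeff_abs_sum_prod p _ (k + 1)).trans ?_
      calc ∏ m ∈ Finset.univ.erase j, (1 + |p m|)
          ≤ ∏ _m ∈ Finset.univ.erase j, (2 : ℝ) := by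
            refine Finset.prod_le_prod (fun m _ => by positivity) fun m _ => ?_
            have := (hp01 m).1; have := (hp01 m).2
            rw [abs_of_nonneg (hp01 m).1]; linarith
        _ = 2 ^ k := by rw [Finset.prod_const, hcard]
    have h2 : |∏ m ∈ Finset.univ.erase j, (p j - p m)⁻¹| ≤ (h ^ k)⁻¹ := by
      rw [abs_prod]
      calc ∏ m ∈ Finset.univ.erase j, |(p j - p m)⁻¹|
          ≤ ∏ _m ∈ Finset.univ.erase j, h⁻¹ := by
            refine Finset.prod_le_prod (fun m _ => abs_nonneg _) fun m hm => ?_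
            have hmj : j ≠ m := (Finset.mem_erase.mp hm).1.symm
            rw [abs_inv]
            exact inv_anti₀ hdisp (dispersion_le p hmj)
        _ = (h ^ k)⁻¹ := by rw [Finset.prod_const, hcard, inv_pow]
    have hnn : (0:ℝ) ≤ ∑ i ∈ Finset.range (k + 1),
        |(∏ m ∈ Finset.univ.erase j, (Polynomial.X - Polynomial.C (p m))).coeff i| :=
      Finset.sum_nonneg fun i _ => abs_nonneg _
    calc _ ≤ (h ^ k)⁻¹ * ∑ i ∈ Finset.range (k + 1),
            |(∏ m ∈ Finset.univ.erase j,
              (Polynomial.X - Polynomial.C (p m))).coeff i| := by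
          exact mul_le_mul_of_nonneg_right h2 hnn
      _ ≤ (h ^ k)⁻¹ * 2 ^ k := by
          refine mul_le_mul_of_nonneg_left h1 ?_
          positivity
  rw [← Matrix.mulVec_sub, hinv]
  set w := y - y' with hw
  have : l1Norm (L *ᵥ w) ≤ ∑ j, ((h ^ k)⁻¹ * 2 ^ k) * |w j| := by
    calc l1Norm (L *ᵥ w) = ∑ i, |∑ j, L i j * w j| := rfl
      _ ≤ ∑ i, ∑ j, |L i j * w j| :=
          Finset.sum_le_sum fun i _ => Finset.abs_sum_le_sum_abs _ _
      _ = ∑ j, (∑ i, |L i j|) * |w j| := by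
          rw [Finset.sum_comm]
          exact Finset.sum_congr rfl fun j _ => by
            rw [Finset.sum_mul]
            exact Finset.sum_congr rfl fun i _ => abs_mul _ _
      _ ≤ ∑ j, ((h ^ k)⁻¹ * 2 ^ k) * |w j| :=
          Finset.sum_le_sum fun j _ =>
            mul_le_mul_of_nonneg_right (hcol j) (abs_nonneg _)
  refine this.trans ?_
  rw [← Finset.mul_sum]
  have : (∑ j, |w j|) = l1Norm w := rfl
  rw [this, div_eq_mul_inv]
  ring_nf
  exact le_refl _
end

section
/- (Solution of the regret-balancing linear system.) Let s ≥ 2 be a real number, k ≥ 1 and m ≥ 1 integers, and suppose real numbers x, y, z_1, …, z_m satisfy: z_1 = x; z_{j+1} − (s/2)·z_j = x − s·k·y for every j = 1, …, m−1; 1 − (s/2)·z_m = x − s·k·y; and 1 − s·y = x. Then, writing S = ∑_{i=0}^{m−1} (s/2)^i, one has x = (1 + S·k) / (S·(k+1) + (s/2)^m). In particular, when s = 2, x = (mk + 1)/(m(k+1) + 1). -/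
/-- Solution of the regret-balancing linear system of the ICM policy: if
`z 1 = x`, `z (j+1) - (s/2) z j = x - s k y` for `1 ≤ j ≤ m - 1`,
`1 - (s/2) z m = x - s k y` and `1 - s y = x`, then with
`S = ∑_{i=0}^{m-1} (s/2)^i` one has `x = (1 + S k)/(S (k+1) + (s/2)^m)`;
in particular, `x = (mk + 1)/(m(k+1) + 1)` when `s = 2`. -/
theorem regret_balancing_system (s : ℝ) (hs : 2 ≤ s) (k m : ℕ)
    (hk : 1 ≤ k) (hm : 1 ≤ m) (x y : ℝ) (z : ℕ → ℝ)
    (h1 : z 1 = x)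
    (h2 : ∀ j : ℕ, 1 ≤ j → j ≤ m - 1 →
      z (j + 1) - s / 2 * z j = x - s * k * y)
    (h3 : 1 - s / 2 * z m = x - s * k * y)
    (h4 : 1 - s * y = x) :
    x = (1 + (∑ i ∈ Finset.range m, (s / 2) ^ i) * k) /
        ((∑ i ∈ Finset.range m, (s / 2) ^ i) * (k + 1) + (s / 2) ^ m) ∧
    (s = 2 → x = (m * k + 1) / (m * (k + 1) + 1)) := by
  have hr1 : (1:ℝ) ≤ s / 2 := by linarith
  set c : ℝ := x - s * k * y with hc
  -- closed form for z j
  have key : ∀ j, 1 ≤ j → j ≤ m →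
      z j = (s/2)^(j-1) * x + (∑ i ∈ Finset.range (j-1), (s/2)^i) * c := by
    intro j
    induction j with
    | zero => intro h; exact absurd h (by norm_num)
    | succ n ih =>
      intro _ hle
      rcases Nat.eq_zero_or_pos n with hn0 | hn1
      · subst hn0; simp [h1]
      · have hrec := h2 n hn1 (by omega)
        have ihn := ih hn1 (by omega)
        have hzn1 : z (n+1) = s/2 * z n + c := by rw [hc]; linarith
        rw [hzn1, ihn]
        have hn' : n = (n-1) + 1 := by omega
        have hsum : ∑ i ∈ Finset.range n, (s/2)^i
            = s/2 * ∑ i ∈ Finset.range (n-1), (s/2)^i + 1 := by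
          rw [hn', geom_sum_succ]; norm_num
        have hpow : (s/2)^n = s/2 * (s/2)^(n-1) := by
          rw [hn', pow_succ]; exact mul_comm _ _
        simp only [Nat.add_sub_cancel]
        rw [hsum, hpow]; ring
  have hzm := key m hm le_rfl
  set S : ℝ := ∑ i ∈ Finset.range m, (s/2)^i with hS
  have hSrec : S = s/2 * ∑ i ∈ Finset.range (m-1), (s/2)^i + 1 := by
    rw [hS, show m = (m-1)+1 by omega, geom_sum_succ]; norm_num
  have hpowm : (s/2)^m = s/2 * (s/2)^(m-1) := by
    rw [show m = (m-1)+1 by omega, pow_succ]; exact mul_comm _ _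
  -- main balance equation: 1 = (s/2)^m x + S c
  have hmain : 1 = (s/2)^m * x + S * c := by
    rw [hzm] at h3
    rw [hpowm, hSrec]
    rw [hc] at h3 ⊢
    nlinarith [h3]
  -- c = x(k+1) - k
  have hcval : c = x * (k + 1) - k := by
    have hsy : s * y = 1 - x := by linarith
    have h5 : s * (k:ℝ) * y = (k:ℝ) * (s * y) := by ring
    rw [hc, h5, hsy]; ring
  rw [hcval] at hmain
  -- positivity of the denominator
  have hSnn : (0:ℝ) ≤ S := by
    rw [hS]
    exact Finset.sum_nonneg fun i _ => pow_nonneg (by linarith) i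
  have hpow1 : (1:ℝ) ≤ (s/2)^m := one_le_pow₀ hr1
  have hden : (0:ℝ) < S * (k + 1) + (s/2)^m := by
    have : (0:ℝ) ≤ S * (k + 1) := mul_nonneg hSnn (by positivity)
    linarith
  have hx : x = (1 + S * k) / (S * (k + 1) + (s/2)^m) := by
    rw [eq_div_iff (ne_of_gt hden)]
    linear_combination -hmain
  refine ⟨hx, fun hs2 => ?_⟩
  have hSval : S = m := by
    rw [hS, hs2]; norm_num
  rw [hx, hSval, hs2]
  norm_num
  ring_nf
end

section
/- Let k ≥ 1 and let p_0, …, p_k ∈ [0,1] be distinct points with dispersion h = min_{i≠j}|p_i − p_j|. Let θ, θ̂ ∈ ℝ^{k+1} be coefficient vectors of two polynomials of degree at most k, and let y, ŷ ∈ ℝ^{k+1} be their respective value vectors y_i = ∑_{j=0}^k θ_j p_i^j and ŷ_i = ∑_{j=0}^k θ̂_j p_i^j. Then ‖θ − θ̂‖_1 ≤ 2^k · h^{-k} · ‖y − ŷ‖_1. -/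
open Polynomial Finset

lemma coeff_abs_le {ι : Type*} [DecidableEq ι] (t : Finset ι) (a : ι → ℝ)
    (ha : ∀ m ∈ t, 0 ≤ a m) :
    ∀ n, |(∏ m ∈ t, (X - C (a m))).coeff n| ≤ (∏ m ∈ t, (X + C (a m))).coeff n := by
  induction t using Finset.induction with
  | empty => intro n; simp [Polynomial.coeff_one]; split <;> simp
  | insert i t hi ih =>
    intro n
    have ha' : ∀ m ∈ t, 0 ≤ a m := fun m hm => ha m (mem_insert_of_mem hm)
    have hai : 0 ≤ a i := ha i (mem_insert_self i t)
    rw [prod_insert hi, prod_insert hi, sub_mul, add_mul, coeff_sub, coeff_add,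
      coeff_C_mul, coeff_C_mul]
    have hX : ∀ g f : ℝ[X], (∀ m, |f.coeff m| ≤ g.coeff m) →
        |(X * f).coeff n| ≤ (X * g).coeff n := by
      intro g f h
      cases n with
      | zero => simp
      | succ m => rw [coeff_X_mul, coeff_X_mul]; exact h m
    calc |(X * ∏ m ∈ t, (X - C (a m))).coeff n - a i * (∏ m ∈ t, (X - C (a m))).coeff n|
        ≤ |(X * ∏ m ∈ t, (X - C (a m))).coeff n| + |a i * (∏ m ∈ t, (X - C (a m))).coeff n| :=
          abs_sub _ _
      _ = |(X * ∏ m ∈ t, (X - C (a m))).coeff n| + a i * |(∏ m ∈ t, (X - C (a m))).coeff n| := by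
          rw [abs_mul, abs_of_nonneg hai]
      _ ≤ (X * ∏ m ∈ t, (X + C (a m))).coeff n + a i * (∏ m ∈ t, (X + C (a m))).coeff n := by
          gcongr
          · exact hX _ _ (ih ha')
          · exact ih ha' n

lemma sum_abs_coeff_le {ι : Type*} [DecidableEq ι] (t : Finset ι) (a : ι → ℝ)
    (ha : ∀ m ∈ t, a m ∈ Set.Icc (0 : ℝ) 1) :
    ∑ n ∈ Finset.range (t.card + 1), |(∏ m ∈ t, (X - C (a m))).coeff n| ≤ 2 ^ t.card := by
  have h0 : ∀ m ∈ t, 0 ≤ a m := fun m hm => (ha m hm).1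
  have hdeg : (∏ m ∈ t, (X + C (a m))).natDegree < t.card + 1 := by
    have := Polynomial.natDegree_prod_le t (fun m => X + C (a m))
    simp only [natDegree_X_add_C, Finset.sum_const, smul_eq_mul, mul_one] at this
    omega
  calc ∑ n ∈ Finset.range (t.card + 1), |(∏ m ∈ t, (X - C (a m))).coeff n|
      ≤ ∑ n ∈ Finset.range (t.card + 1), (∏ m ∈ t, (X + C (a m))).coeff n := by
        exact Finset.sum_le_sum fun n _ => coeff_abs_le t a h0 n
    _ = (∏ m ∈ t, (X + C (a m))).eval 1 := by
        rw [Polynomial.eval_eq_sum_range' hdeg]; simp only [one_pow, mul_one]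
    _ = ∏ m ∈ t, (1 + a m) := by simp [Polynomial.eval_prod]
    _ ≤ ∏ m ∈ t, (2 : ℝ) := by
        apply Finset.prod_le_prod
        · intro m hm; linarith [(ha m hm).1]
        · intro m hm; linarith [(ha m hm).2]
    _ = 2 ^ t.card := by rw [Finset.prod_const]

/-- Estimation-error bound for polynomial coefficients: if `θ` and `θ̂` are
coefficient vectors of polynomials of degree at most `k` with value vectors
`y` and `ŷ` at distinct points `p_0, …, p_k ∈ [0,1]` of dispersion `h`, then
`‖θ - θ̂‖₁ ≤ 2^k · h^{-k} · ‖y - ŷ‖₁`. -/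
theorem coefficient_estimation_error (k : ℕ) (hk : 1 ≤ k)
    (p : Fin (k + 1) → ℝ) (hp : ∀ i, p i ∈ Set.Icc (0 : ℝ) 1)
    (hinj : Function.Injective p)
    (θ θhat : Fin (k + 1) → ℝ) (y yhat : Fin (k + 1) → ℝ)
    (hy : ∀ i, y i = ∑ j : Fin (k + 1), θ j * p i ^ (j : ℕ))
    (hyhat : ∀ i, yhat i = ∑ j : Fin (k + 1), θhat j * p i ^ (j : ℕ)) :
    ∑ j, |θ j - θhat j| ≤
      2 ^ k / (dispersion p) ^ k * ∑ i, |y i - yhat i| := by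
  classical
  set S : Set ℝ := {d : ℝ | ∃ i j, i ≠ j ∧ d = |p i - p j|} with hS
  have hSfin : S.Finite := by
    apply Set.Finite.subset
      (Set.finite_range (fun q : Fin (k+1) × Fin (k+1) => |p q.1 - p q.2|))
    rintro d ⟨i, j, _, rfl⟩
    exact ⟨(i, j), rfl⟩
  have hSne : S.Nonempty := by
    refine ⟨|p 0 - p 1|, 0, 1, ?_, rfl⟩
    intro h01
    have : (0 : ℕ) = 1 % (k+1) := by simpa [Fin.ext_iff] using h01
    rw [Nat.mod_eq_of_lt (by omega)] at this
    omega
  have hmem : dispersion p ∈ S := hSne.csInf_mem hSfin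
  have hdisp_pos : 0 < dispersion p := by
    obtain ⟨i, j, hij, hd⟩ := hmem
    rw [hd]
    exact abs_pos.mpr (sub_ne_zero.mpr (fun h => hij (hinj h)))
  have hdisp_le : ∀ i j : Fin (k+1), i ≠ j → dispersion p ≤ |p i - p j| := by
    intro i j hij
    exact csInf_le hSfin.bddBelow ⟨i, j, hij, rfl⟩
  set h := dispersion p
  -- the difference polynomial
  set q : ℝ[X] := ∑ j : Fin (k+1), C (θ j - θhat j) * X ^ (j : ℕ) with hq
  have heval : ∀ i, q.eval (p i) = y i - yhat i := by
    intro i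
    rw [hy, hyhat, hq]
    simp [eval_finset_sum, sub_mul, Finset.sum_sub_distrib]
  have hdeg : q.degree < (Finset.univ : Finset (Fin (k+1))).card := by
    rw [Finset.card_univ, Fintype.card_fin]
    apply lt_of_le_of_lt (Polynomial.degree_sum_le _ _)
    rw [Finset.sup_lt_iff (by exact_mod_cast WithBot.bot_lt_coe (k+1))]
    intro j _
    apply lt_of_le_of_lt (Polynomial.degree_C_mul_X_pow_le _ _)
    exact_mod_cast j.isLt
  have hinterp := Lagrange.eq_interpolate (f := q) (Function.Injective.injOn hinj) hdeg
  have hcoeff : ∀ n : ℕ, q.coeff n =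
      ∑ i : Fin (k+1), (y i - yhat i) * (Lagrange.basis Finset.univ p i).coeff n := by
    intro n
    conv_lhs => rw [hinterp]
    rw [Lagrange.interpolate_apply, Polynomial.finset_sum_coeff]
    exact Finset.sum_congr rfl fun i _ => by rw [coeff_C_mul, heval]
  -- coefficient extraction: θ j - θhat j = q.coeff j
  have hqc : ∀ j : Fin (k+1), q.coeff (j : ℕ) = θ j - θhat j := by
    intro j
    rw [hq, Polynomial.finset_sum_coeff]
    rw [Finset.sum_eq_single j]
    · rw [coeff_C_mul, coeff_X_pow, if_pos rfl, mul_one]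
    · intro b _ hbj
      rw [coeff_C_mul, coeff_X_pow, if_neg (fun hh => hbj (Fin.ext hh.symm)), mul_zero]
    · simp
  -- the basis bound
  have hbasis : ∀ i : Fin (k+1),
      ∑ n : Fin (k+1), |(Lagrange.basis Finset.univ p i).coeff (n : ℕ)| ≤ 2 ^ k / h ^ k := by
    intro i
    have hcard : (Finset.univ.erase i).card = k := by
      rw [Finset.card_erase_of_mem (Finset.mem_univ i), Finset.card_univ, Fintype.card_fin]
      omega
    have hbasis_eq : Lagrange.basis Finset.univ p i =
        C (∏ m ∈ Finset.univ.erase i, (p i - p m)⁻¹) *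
          ∏ m ∈ Finset.univ.erase i, (X - C (p m)) := by
      rw [Lagrange.basis]
      unfold Lagrange.basisDivisor
      rw [Finset.prod_mul_distrib, map_prod]
    have hCbound : |∏ m ∈ Finset.univ.erase i, (p i - p m)⁻¹| ≤ (h ^ k)⁻¹ := by
      rw [Finset.abs_prod]
      calc ∏ m ∈ Finset.univ.erase i, |(p i - p m)⁻¹|
          ≤ ∏ m ∈ Finset.univ.erase i, h⁻¹ := by
            apply Finset.prod_le_prod
            · intro m _; positivity
            · intro m hm
              rw [abs_inv]
              apply inv_anti₀ hdisp_pos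
              exact hdisp_le i m (Finset.ne_of_mem_erase hm).symm
        _ = (h ^ k)⁻¹ := by rw [Finset.prod_const, hcard, inv_pow]
    have hfsum : ∑ n : Fin (k+1), |(∏ m ∈ Finset.univ.erase i, (X - C (p m))).coeff (n : ℕ)|
        ≤ 2 ^ k := by
      have h2 := sum_abs_coeff_le (Finset.univ.erase i) p (fun m _ => hp m)
      rw [hcard] at h2
      have h3 : ∑ n : Fin (k+1), |(∏ m ∈ Finset.univ.erase i, (X - C (p m))).coeff (n : ℕ)|
          = ∑ n ∈ Finset.range (k+1), |(∏ m ∈ Finset.univ.erase i, (X - C (p m))).coeff n| :=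
        Fin.sum_univ_eq_sum_range (fun n => |(∏ m ∈ Finset.univ.erase i, (X - C (p m))).coeff n|) (k+1)
      rw [h3]
      exact h2
    calc ∑ n : Fin (k+1), |(Lagrange.basis Finset.univ p i).coeff (n : ℕ)|
        = ∑ n : Fin (k+1), |∏ m ∈ Finset.univ.erase i, (p i - p m)⁻¹| *
            |(∏ m ∈ Finset.univ.erase i, (X - C (p m))).coeff (n : ℕ)| := by
          apply Finset.sum_congr rfl
          intro n _
          rw [hbasis_eq, coeff_C_mul, abs_mul]
      _ = |∏ m ∈ Finset.univ.erase i, (p i - p m)⁻¹| *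
            ∑ n : Fin (k+1), |(∏ m ∈ Finset.univ.erase i, (X - C (p m))).coeff (n : ℕ)| := by
          rw [Finset.mul_sum]
      _ ≤ (h ^ k)⁻¹ * 2 ^ k := by
          apply mul_le_mul hCbound hfsum (by positivity) (by positivity)
      _ = 2 ^ k / h ^ k := by rw [div_eq_mul_inv, mul_comm]
  -- putting it together
  calc ∑ j : Fin (k+1), |θ j - θhat j|
      = ∑ j : Fin (k+1), |q.coeff (j : ℕ)| := by
        exact Finset.sum_congr rfl fun j _ => by rw [hqc]
    _ ≤ ∑ j : Fin (k+1), ∑ i : Fin (k+1),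
          |y i - yhat i| * |(Lagrange.basis Finset.univ p i).coeff (j : ℕ)| := by
        apply Finset.sum_le_sum
        intro j _
        rw [hcoeff]
        calc |∑ i : Fin (k+1), (y i - yhat i) * (Lagrange.basis Finset.univ p i).coeff (j : ℕ)|
            ≤ ∑ i : Fin (k+1),
                |(y i - yhat i) * (Lagrange.basis Finset.univ p i).coeff (j : ℕ)| :=
              Finset.abs_sum_le_sum_abs _ _
          _ = ∑ i : Fin (k+1),
                |y i - yhat i| * |(Lagrange.basis Finset.univ p i).coeff (j : ℕ)| := by
              exact Finset.sum_congr rfl fun i _ => abs_mul _ _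
    _ = ∑ i : Fin (k+1), |y i - yhat i| *
          ∑ j : Fin (k+1), |(Lagrange.basis Finset.univ p i).coeff (j : ℕ)| := by
        rw [Finset.sum_comm]
        exact Finset.sum_congr rfl fun i _ => by rw [Finset.mul_sum]
    _ ≤ ∑ i : Fin (k+1), |y i - yhat i| * (2 ^ k / h ^ k) := by
        apply Finset.sum_le_sum
        intro i _
        exact mul_le_mul_of_nonneg_left (hbasis i) (abs_nonneg _)
    _ = 2 ^ k / h ^ k * ∑ i, |y i - yhat i| := by
        rw [Finset.mul_sum]
        exact Finset.sum_congr rfl fun i _ => mul_comm _ _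
end
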